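/- arXiv:1112.3690 — 2 statements merged into one kernel-verified Lean document; each statement's English description precedes it below -/
import Mathlib

section
/- Let α ∈ (1,2), ρ ∈ (1−1/α, 1/α), ρ̂ = 1−ρ. For every λ ≥ 0, ∫_0^∞ (1−e^{−λx}) (e^{x}−1)^{−(αρ+1)} (α−1+(1−αρ̂)e^{x}) dx = Γ(1−αρ)·[ (α−1+λ)·Γ(αρ+λ)/Γ(1+λ) − (α−1)·Γ(αρ) ]. -/
open MeasureTheory
open Set Filter


lemma betaComplex_eqOn {p q : ℝ} :
    EqOn (fun t : ℝ => ((t:ℂ) ^ ((p:ℂ)-1) * (1-(t:ℂ)) ^ ((q:ℂ)-1)))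
      (fun t : ℝ => ((t ^ (p-1) * (1-t) ^ (q-1) : ℝ) : ℂ)) (Icc 0 1) := by
  intro t ht
  simp only
  rw [show ((p:ℂ)-1) = ((p-1 : ℝ) : ℂ) by push_cast; ring,
    show ((q:ℂ)-1) = ((q-1 : ℝ) : ℂ) by push_cast; ring,
    show (1-(t:ℂ)) = ((1-t : ℝ) : ℂ) by push_cast; ring,
    ← Complex.ofReal_cpow ht.1, ← Complex.ofReal_cpow (by linarith [ht.2]), Complex.ofReal_mul]

lemma betaReal_integrableOn {p q : ℝ} (hp : 0 < p) (hq : 0 < q) :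
    IntegrableOn (fun t : ℝ => t ^ (p-1) * (1-t) ^ (q-1)) (Ioo 0 1) := by
  have K := (Complex.betaIntegral_convergent (u := p) (v := q) (by simpa using hp)
    (by simpa using hq)).1
  have K2 : IntegrableOn (fun t : ℝ => ((t:ℂ) ^ ((p:ℂ)-1) * (1-(t:ℂ)) ^ ((q:ℂ)-1)))
      (Ioo 0 1) := K.mono_set Ioo_subset_Ioc_self
  have K3 : IntegrableOn (fun t : ℝ => ((t:ℂ) ^ ((p:ℂ)-1) * (1-(t:ℂ)) ^ ((q:ℂ)-1)).re)
      (Ioo 0 1) := K2.re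
  exact (K3.congr_fun (fun t ht => by
    have := betaComplex_eqOn (p := p) (q := q) (Ioo_subset_Icc_self ht)
    simp only at this
    beta_reduce; rw [this]; simp) measurableSet_Ioo)

lemma betaReal_eq {p q : ℝ} (hp : 0 < p) (hq : 0 < q) :
    ∫ t in Ioo (0:ℝ) 1, t ^ (p-1) * (1-t) ^ (q-1)
      = Real.Gamma p * Real.Gamma q / Real.Gamma (p+q) := by
  have h := Complex.Gamma_mul_Gamma_eq_betaIntegral (s := p) (t := q)
    (by simpa using hp) (by simpa using hq)
  have hβ : Complex.betaIntegral p q = ((∫ t in Ioo (0:ℝ) 1, t ^ (p-1) * (1-t) ^ (q-1) : ℝ) : ℂ) := by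
    rw [Complex.betaIntegral]
    rw [intervalIntegral.integral_congr (g := fun t : ℝ => ((t ^ (p-1) * (1-t) ^ (q-1) : ℝ) : ℂ))
      (by simpa [Set.uIcc_of_le (zero_le_one (α := ℝ))] using betaComplex_eqOn (p := p) (q := q))]
    rw [intervalIntegral.integral_ofReal]
    norm_cast
    rw [intervalIntegral.integral_of_le zero_le_one, integral_Ioc_eq_integral_Ioo]
  rw [hβ] at h
  have hΓ : Real.Gamma (p+q) ≠ 0 := (Real.Gamma_pos_of_pos (by linarith)).ne'
  have := h
  rw [show ((p:ℂ)+(q:ℂ)) = ((p+q : ℝ) : ℂ) by push_cast; ring] at this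
  rw [Complex.Gamma_ofReal, Complex.Gamma_ofReal, Complex.Gamma_ofReal] at this
  field_simp
  have this2 : Real.Gamma p * Real.Gamma q
      = Real.Gamma (p+q) * ∫ (t : ℝ) in Ioo 0 1, t ^ (p - 1) * (1 - t) ^ (q - 1) := by
    exact_mod_cast this
  linarith [this2]


lemma bern {t lam : ℝ} (ht0 : 0 ≤ t) (ht1 : t ≤ 1) (hlam : 0 ≤ lam) :
    1 - t ^ lam ≤ max 1 lam * (1 - t) := by
  rcases eq_or_lt_of_le ht0 with h0 | h0
  · have h1 : (1:ℝ) ≤ max 1 lam := le_max_left _ _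
    have h2 : (0:ℝ) ≤ (0:ℝ) ^ lam := Real.rpow_nonneg le_rfl _
    rw [← h0]
    nlinarith
  rcases le_total lam 1 with h | h
  · have : t ^ (1:ℝ) ≤ t ^ lam := Real.rpow_le_rpow_of_exponent_ge h0 ht1 h
    rw [Real.rpow_one] at this
    have h1 : (1:ℝ) ≤ max 1 lam := le_max_left _ _
    nlinarith
  · have hb := one_add_mul_self_le_rpow_one_add (s := t - 1) (by linarith) h
    rw [show (1:ℝ) + (t-1) = t by ring] at hb
    have h1 : lam ≤ max 1 lam := le_max_right _ _
    nlinarith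

lemma key {a c lam : ℝ} (ha : 0 < a) (ha1 : a < 1) (hc : 0 < c) (hca : c < a)
    (hlam : 0 < lam) :
    ∫ t in Ioo (0:ℝ) 1, (1 - t ^ lam) * (a - c + c * t) * (t ^ (a-1) * (1-t) ^ (-a-1))
      = Real.Gamma (1-a) *
        ((c + lam) * Real.Gamma (a + lam) / Real.Gamma (1 + lam) - c * Real.Gamma a) := by
  have halam : 0 < a + lam := by linarith
  have h1a : 0 < 1 - a := by linarith
  set β1 : ℝ → ℝ := fun t => t ^ ((a+lam)-1) * (1-t) ^ ((1-a)-1) with hβ1def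
  set β2 : ℝ → ℝ := fun t => t ^ (a-1) * (1-t) ^ ((1-a)-1) with hβ2def
  set g : ℝ → ℝ := fun t => (1 - t ^ lam) * (a - c + c * t) * (t ^ (a-1) * (1-t) ^ (-a-1))
    with hgdef
  set H : ℝ → ℝ := fun t => (t ^ a - t ^ (a+lam)) * (1-t) ^ (-a) with hHdef
  set H' : ℝ → ℝ := fun t => (a * t^(a-1) - (a+lam) * t^(a+lam-1)) * (1-t)^(-a)
    + (t^a - t^(a+lam)) * (a * (1-t)^(-a-1)) with hH'def
  have hβ1int : IntegrableOn β1 (Ioo 0 1) := betaReal_integrableOn halam h1a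
  have hβ2int : IntegrableOn β2 (Ioo 0 1) := betaReal_integrableOn ha h1a
  -- pointwise identity
  have hptwise : ∀ t ∈ Ioo (0:ℝ) 1, g t = (c+lam) * β1 t - c * β2 t + H' t := by
    intro t ht
    obtain ⟨ht0, ht1⟩ := ht
    have h1t : 0 < 1 - t := by linarith
    have e1 : t ^ a = t ^ (a-1) * t := by
      nth_rewrite 1 [show a = (a-1)+1 by ring]
      rw [Real.rpow_add_one ht0.ne']
    have e2 : t ^ (a+lam-1) = t ^ (a-1) * t ^ lam := by
      rw [show a+lam-1 = (a-1)+lam by ring, Real.rpow_add ht0]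
    have e3 : t ^ (a+lam) = t ^ (a-1) * t * t ^ lam := by
      rw [show a+lam = ((a-1)+1)+lam by ring, Real.rpow_add ht0, Real.rpow_add_one ht0.ne']
    have e4 : (1-t) ^ (-a) = (1-t) ^ (-a-1) * (1-t) := by
      nth_rewrite 1 [show -a = (-a-1)+1 by ring]
      rw [Real.rpow_add_one h1t.ne']
    have e5 : (1-t) ^ ((1-a)-1) = (1-t) ^ (-a-1) * (1-t) := by
      rw [show (1-a)-1 = -a by ring]; exact e4
    simp only [hβ1def, hβ2def, hgdef, hH'def]
    rw [e1, e2, e3, e4, e5]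
    ring
  -- integrability of g
  have hgcont : ContinuousOn g (Ioo 0 1) := by
    apply ContinuousOn.mul
    · apply ContinuousOn.mul
      · exact continuousOn_const.sub (continuousOn_id.rpow_const
          (fun t ht => Or.inl (ne_of_gt ht.1)))
      · fun_prop
    · apply ContinuousOn.mul
      · exact continuousOn_id.rpow_const (fun t ht => Or.inl (ne_of_gt ht.1))
      · exact (continuousOn_const.sub continuousOn_id).rpow_const
          (fun t ht => Or.inl (by simp; linarith [ht.2]))
  have hgint : IntegrableOn g (Ioo 0 1) := by
    apply Integrable.mono (hβ2int.const_mul (max 1 lam * a))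
      (hgcont.aestronglyMeasurable measurableSet_Ioo)
    rw [ae_restrict_iff' measurableSet_Ioo]
    filter_upwards with t ht
    obtain ⟨ht0, ht1⟩ := ht
    have h1t : 0 < 1 - t := by linarith
    have e5 : (1-t) ^ ((1-a)-1) = (1-t) * (1-t) ^ (-a-1) := by
      rw [show (1-a)-1 = (-a-1)+1 by ring, Real.rpow_add_one h1t.ne']; ring
    have hs1 : 0 ≤ 1 - t ^ lam := by
      have := Real.rpow_le_one ht0.le ht1.le hlam.le
      linarith
    have hX : 0 ≤ t ^ (a-1) * (1-t) ^ (-a-1) := by positivity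
    have hM : (1:ℝ) ≤ max 1 lam := le_max_left _ _
    have hgt : 0 ≤ g t := by
      simp only [hgdef]
      have : 0 ≤ a - c + c * t := by nlinarith
      positivity
    have hβt : 0 ≤ t ^ (a-1) * (1-t) ^ ((1-a)-1) := by positivity
    rw [Real.norm_eq_abs, Real.norm_eq_abs, abs_of_nonneg hgt,
      abs_of_nonneg (by positivity : (0:ℝ) ≤ max 1 lam * a * (t ^ (a-1) * (1-t) ^ ((1-a)-1)))]
    simp only [hgdef, hβ2def]
    rw [e5]
    have hb := bern ht0.le ht1.le hlam.le
    have hac : a - c + c * t ≤ a := by nlinarith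
    have h2 : (1 - t ^ lam) * (a - c + c * t) ≤ (max 1 lam * (1-t)) * a := by
      apply mul_le_mul hb hac (by nlinarith) (by positivity)
    calc (1 - t ^ lam) * (a - c + c * t) * (t ^ (a-1) * (1-t) ^ (-a-1))
        ≤ (max 1 lam * (1-t)) * a * (t ^ (a-1) * (1-t) ^ (-a-1)) :=
          mul_le_mul_of_nonneg_right h2 hX
      _ = max 1 lam * a * (t ^ (a-1) * ((1-t) * (1-t) ^ (-a-1))) := by ring
  -- integrability of H'
  have hH'int : IntegrableOn H' (Ioo 0 1) := by
    apply IntegrableOn.congr_fun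
      ((hgint.sub (hβ1int.const_mul (c+lam))).add (hβ2int.const_mul c))
      (fun t ht => by have := hptwise t ht; simp only [Pi.add_apply, Pi.sub_apply]; linarith)
      measurableSet_Ioo
  -- derivative
  have hderiv : ∀ t ∈ Ioo (0:ℝ) 1, HasDerivAt H (H' t) t := by
    intro t ht
    obtain ⟨ht0, ht1⟩ := ht
    have h1t : 0 < 1 - t := by linarith
    have h1 : HasDerivAt (fun t : ℝ => t ^ a) (a * t ^ (a-1)) t := by
      simpa using Real.hasDerivAt_rpow_const (p := a) (Or.inl ht0.ne')
    have h2 : HasDerivAt (fun t : ℝ => t ^ (a+lam)) ((a+lam) * t ^ (a+lam-1)) t := by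
      simpa using Real.hasDerivAt_rpow_const (p := a+lam) (Or.inl ht0.ne')
    have hsub : HasDerivAt (fun t : ℝ => 1 - t) (-1) t := by
      simpa using (hasDerivAt_id t).const_sub 1
    have h3 : HasDerivAt (fun t : ℝ => (1-t) ^ (-a)) (a * (1-t) ^ (-a-1)) t := by
      have := hsub.rpow_const (p := -a) (Or.inl h1t.ne')
      convert this using 1
      ring
    have := (h1.sub h2).mul h3
    exact this
  -- continuity of H on Icc
  have hH1 : H 1 = 0 := by
    simp only [hHdef]
    rw [sub_self, Real.zero_rpow (by linarith : -a ≠ 0)]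
    ring
  have hH0 : H 0 = 0 := by
    simp only [hHdef]
    rw [Real.zero_rpow ha.ne', Real.zero_rpow halam.ne']
    ring
  have hcont : ContinuousOn H (Icc 0 1) := by
    intro t ht
    rcases eq_or_ne t 1 with rfl | ht1
    · -- squeeze at 1
      have hB : Tendsto (fun t : ℝ => max 1 lam * (1-t) ^ (1-a))
          (nhdsWithin 1 (Icc 0 1)) (nhds 0) := by
        have hc0 : ContinuousAt (fun t : ℝ => max 1 lam * (1-t) ^ (1-a)) 1 := by
          have h3 : ContinuousAt (fun y : ℝ => y ^ (1-a)) (1-(1:ℝ)) :=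
            Real.continuousAt_rpow_const _ _ (Or.inr h1a.le)
          exact continuousAt_const.mul (h3.comp (by fun_prop))
        have h4 := hc0.continuousWithinAt (s := Icc 0 1)
        have h5 : max 1 lam * (1-(1:ℝ)) ^ (1-a) = 0 := by
          rw [sub_self, Real.zero_rpow h1a.ne']; ring
        simp only [ContinuousWithinAt] at h4
        rwa [h5] at h4
      have hsq : Tendsto H (nhdsWithin 1 (Icc 0 1)) (nhds 0) := by
        apply squeeze_zero' ?_ ?_ hB
        · filter_upwards [self_mem_nhdsWithin] with t ht
          obtain ⟨ht0, ht1⟩ := ht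
          simp only [hHdef]
          have : t ^ (a+lam) ≤ t ^ a :=
            Real.rpow_le_rpow_of_exponent_ge' ht0 ht1 ha.le (by linarith)
          have h2 : (0:ℝ) ≤ (1-t) ^ (-a) := Real.rpow_nonneg (by linarith) _
          nlinarith
        · filter_upwards [self_mem_nhdsWithin] with t ht
          obtain ⟨ht0, ht1⟩ := ht
          simp only [hHdef]
          rcases eq_or_lt_of_le ht0 with h0 | h0
          · rw [← h0, Real.zero_rpow ha.ne', Real.zero_rpow halam.ne']
            have : (0:ℝ) ≤ max 1 lam * (1-0) ^ (1-a) := by positivity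
            simpa using this
          rcases eq_or_lt_of_le ht1 with h1 | h1
          · rw [h1, sub_self, Real.zero_rpow (by linarith : -a ≠ 0),
              Real.zero_rpow h1a.ne']
            simp
          have h1t : 0 < 1 - t := by linarith
          have e3 : t ^ (a+lam) = t ^ a * t ^ lam := Real.rpow_add h0 _ _
          have e4 : (1-t) ^ (1-a) = (1-t) ^ (-a) * (1-t) := by
            rw [show (1:ℝ)-a = (-a)+1 by ring, Real.rpow_add_one h1t.ne']
          have hA1 : t ^ a ≤ 1 := Real.rpow_le_one h0.le h1.le ha.le
          have hs : (0:ℝ) ≤ 1 - t ^ lam := by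
            have := Real.rpow_le_one h0.le h1.le hlam.le
            linarith
          have hv : (0:ℝ) ≤ (1-t) ^ (-a) := Real.rpow_nonneg h1t.le _
          have hb := bern h0.le h1.le hlam.le
          rw [e3, e4]
          nlinarith [mul_le_mul_of_nonneg_right
              (mul_le_mul_of_nonneg_right hA1 hs) hv,
            mul_le_mul_of_nonneg_right hb hv]
      have : ContinuousWithinAt H (Icc 0 1) 1 := by
        simp only [ContinuousWithinAt, hH1]
        exact hsq
      exact this
    · -- continuity elsewhere
      apply ContinuousAt.continuousWithinAt
      have h1t : 1 - t ≠ 0 := by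
        intro h; exact ht1 (by linarith [ht.2])
      apply ContinuousAt.mul
      · apply ContinuousAt.sub
        · exact Real.continuousAt_rpow_const _ _ (Or.inr ha.le)
        · exact Real.continuousAt_rpow_const _ _ (Or.inr halam.le)
      · exact (Real.continuousAt_rpow_const _ _ (Or.inl h1t)).comp
          (by fun_prop)
  -- FTC
  have hint : IntervalIntegrable H' volume 0 1 := by
    rw [intervalIntegrable_iff, uIoc_of_le zero_le_one,
      integrableOn_Ioc_iff_integrableOn_Ioo]
    exact hH'int
  have hFTC : ∫ t in Ioo (0:ℝ) 1, H' t = 0 := by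
    have := intervalIntegral.integral_eq_sub_of_hasDerivAt_of_le zero_le_one hcont hderiv hint
    rw [hH1, hH0, sub_zero] at this
    rw [← integral_Ioc_eq_integral_Ioo, ← intervalIntegral.integral_of_le zero_le_one, this]
  -- combine
  rw [setIntegral_congr_fun measurableSet_Ioo hptwise]
  have hf2 : IntegrableOn (fun t => (c+lam) * β1 t - c * β2 t) (Ioo 0 1) :=
    (hβ1int.const_mul (c+lam)).sub (hβ2int.const_mul c)
  rw [integral_add hf2 hH'int,
    integral_sub (hβ1int.const_mul (c+lam)) (hβ2int.const_mul c),
    integral_const_mul, integral_const_mul, hFTC]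
  simp only [hβ1def, hβ2def]
  rw [betaReal_eq halam h1a, betaReal_eq ha h1a,
    show a + lam + (1-a) = 1 + lam by ring, show a + (1-a) = 1 by ring, Real.Gamma_one]
  ring

lemma subst_ptwise (a c lam : ℝ) {x : ℝ} (hx : 0 < x) :
    Real.exp (-x) * ((1 - Real.exp (-x) ^ lam) * (a - c + c * Real.exp (-x)) *
      (Real.exp (-x) ^ (a-1) * (1 - Real.exp (-x)) ^ (-a-1)))
    = (1 - Real.exp (-lam * x)) * (Real.exp x - 1) ^ (-(a+1)) *
        (c + (a - c) * Real.exp x) := by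
  have he1 : Real.exp (-x) ≤ 1 := Real.exp_le_one_iff.mpr (by linarith)
  have r1 : Real.exp (-x) ^ lam = Real.exp (-lam * x) := by
    rw [← Real.exp_mul]; exact congrArg Real.exp (by ring)
  have r1' : Real.exp (-x) ^ (a-1) = Real.exp (-(x*a)) * Real.exp x := by
    rw [← Real.exp_mul, ← Real.exp_add]; exact congrArg Real.exp (by ring)
  have r2 : Real.exp x - 1 = Real.exp x * (1 - Real.exp (-x)) := by
    rw [mul_sub, mul_one, ← Real.exp_add]
    simp
  have r3 : (Real.exp x * (1 - Real.exp (-x))) ^ (-(a+1))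
      = Real.exp x ^ (-(a+1)) * (1 - Real.exp (-x)) ^ (-(a+1)) :=
    Real.mul_rpow (Real.exp_pos x).le (by linarith)
  have r4 : Real.exp x ^ (-(a+1)) = Real.exp (-(x*a)) * Real.exp (-x) := by
    rw [← Real.exp_mul, ← Real.exp_add]; exact congrArg Real.exp (by ring)
  have r5 : ((-(a+1)) : ℝ) = -a-1 := by ring
  rw [r1, r1', r2, r3, r4, r5]
  have hE := (Real.exp_pos x).ne'
  have : Real.exp x * Real.exp (-x) = 1 := by
    rw [← Real.exp_add]; simp
  linear_combination (1 - Real.exp (-lam * x)) * Real.exp (-(x*a)) *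
    (1 - Real.exp (-x)) ^ (-a-1) * c * Real.exp (-x) * this

theorem ascending_ladder_laplace_exponent_big_alpha
    (α ρ : ℝ) (hα : α ∈ Set.Ioo (1:ℝ) 2) (hρ : ρ ∈ Set.Ioo (1 - 1/α) (1/α))
    (lam : ℝ) (hlam : 0 ≤ lam) :
    ∫ x in Set.Ioi (0:ℝ),
        (1 - Real.exp (-lam * x)) * (Real.exp x - 1) ^ (-(α * ρ + 1)) *
          (α - 1 + (1 - α * (1 - ρ)) * Real.exp x) =
    Real.Gamma (1 - α * ρ) *
      ((α - 1 + lam) * Real.Gamma (α * ρ + lam) / Real.Gamma (1 + lam) -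
        (α - 1) * Real.Gamma (α * ρ)) := by
  obtain ⟨hα1, hα2⟩ := hα
  obtain ⟨hρ1, hρ2⟩ := hρ
  have hα0 : 0 < α := by linarith
  have ha1 : α * ρ < 1 := by
    have := (mul_lt_mul_of_pos_left hρ2 hα0)
    rwa [mul_one_div, div_self hα0.ne'] at this
  have hca : α - 1 < α * ρ := by
    have := (mul_lt_mul_of_pos_left hρ1 hα0)
    rw [mul_sub, mul_one, mul_one_div, div_self hα0.ne'] at this
    linarith
  have hc : 0 < α - 1 := by linarith
  have ha : 0 < α * ρ := by linarith
  rcases hlam.eq_or_lt with rfl | hlam0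
  · simp only [neg_zero, zero_mul, neg_mul]
    norm_num [Real.Gamma_one]
  · -- λ > 0 : substitution t = exp (-x)
    have himg : (fun x : ℝ => Real.exp (-x)) '' (Ioi 0) = Ioo 0 1 := by
      ext y
      simp only [mem_image, mem_Ioi, mem_Ioo]
      constructor
      · rintro ⟨x, hx, rfl⟩
        refine ⟨Real.exp_pos _, ?_⟩
        rw [← Real.exp_zero]
        exact Real.exp_lt_exp.mpr (by linarith)
      · rintro ⟨hy0, hy1⟩
        exact ⟨-Real.log y, by simpa using Real.log_neg hy0 hy1,
          by rw [neg_neg, Real.exp_log hy0]⟩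
    have hderivW : ∀ x ∈ Ioi (0:ℝ),
        HasDerivWithinAt (fun x : ℝ => Real.exp (-x)) (-Real.exp (-x)) (Ioi 0) x := by
      intro x _
      have := ((Real.hasDerivAt_exp (-x)).comp x (hasDerivAt_neg x))
      simpa [Function.comp_def] using this.hasDerivWithinAt
    have hinj : InjOn (fun x : ℝ => Real.exp (-x)) (Ioi 0) :=
      (Real.exp_injective.comp neg_injective).injOn
    have hsub := integral_image_eq_integral_abs_deriv_smul measurableSet_Ioi hderivW hinj
      (fun t : ℝ => (1 - t ^ lam) * (α * ρ - (α - 1) + (α - 1) * t) *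
        (t ^ (α * ρ - 1) * (1 - t) ^ (-(α * ρ) - 1)))
    rw [himg] at hsub
    have hpt : EqOn
        (fun x : ℝ => (1 - Real.exp (-lam * x)) * (Real.exp x - 1) ^ (-(α * ρ + 1)) *
          (α - 1 + (1 - α * (1 - ρ)) * Real.exp x))
        (fun x : ℝ => |(-Real.exp (-x))| • ((1 - Real.exp (-x) ^ lam) *
          (α * ρ - (α - 1) + (α - 1) * Real.exp (-x)) *
          (Real.exp (-x) ^ (α * ρ - 1) * (1 - Real.exp (-x)) ^ (-(α * ρ) - 1))))
        (Ioi 0) := by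
      intro x hx
      simp only [smul_eq_mul, abs_neg, abs_of_pos (Real.exp_pos (-x))]
      rw [subst_ptwise (α * ρ) (α - 1) lam hx]
      have h2 : 1 - α * (1 - ρ) = α * ρ - (α - 1) := by ring
      rw [h2]
    rw [setIntegral_congr_fun measurableSet_Ioi hpt, ← hsub,
      key ha ha1 hc hca hlam0]
end

section
/- Let α ∈ (1,2), ρ ∈ (1−1/α, 1/α), ρ̂ = 1−ρ. For every λ ≥ 0, ∫_0^∞ (1−e^{−λx}) e^{(α−1)x} (e^{x}−1)^{−(αρ̂+1)} (α−1+(1−αρ)e^{x}) dx = Γ(1−αρ̂)·λ·Γ(1−αρ+λ)/Γ(2−α+λ). -/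
open MeasureTheory Real Set

lemma cpow_ofReal_aux {x : ℝ} (hx0 : 0 ≤ x) (hx1 : x ≤ 1) (b c : ℝ) :
    (x:ℂ) ^ ((b:ℂ) - 1) * ((1:ℂ) - x) ^ ((c:ℂ) - 1)
      = ((x ^ (b - 1) * (1 - x) ^ (c - 1) : ℝ) : ℂ) := by
  rw [Complex.ofReal_mul, Complex.ofReal_cpow hx0, Complex.ofReal_cpow (by linarith)]
  push_cast
  ring

lemma complexBeta_eq {b c : ℝ} (hb : 0 < b) (hc : 0 < c) :
    Complex.betaIntegral b c
      = ((Real.Gamma b * Real.Gamma c / Real.Gamma (b + c) : ℝ) : ℂ) := by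
  have h1 : Complex.Gamma b * Complex.Gamma c
      = Complex.Gamma (b + c) * Complex.betaIntegral b c :=
    Complex.Gamma_mul_Gamma_eq_betaIntegral (by simpa using hb) (by simpa using hc)
  have hne : (Real.Gamma (b + c) : ℂ) ≠ 0 := by
    simp only [ne_eq, Complex.ofReal_eq_zero]
    exact (Real.Gamma_pos_of_pos (add_pos hb hc)).ne'
  rw [Complex.ofReal_div, Complex.ofReal_mul, eq_div_iff hne]
  rw [← Complex.ofReal_add, Complex.Gamma_ofReal, Complex.Gamma_ofReal,
    Complex.Gamma_ofReal] at h1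
  linear_combination -h1

lemma realBeta_integral {b c : ℝ} (hb : 0 < b) (hc : 0 < c) :
    ∫ t in Ioo (0:ℝ) 1, t ^ (b - 1) * (1 - t) ^ (c - 1) =
      Real.Gamma b * Real.Gamma c / Real.Gamma (b + c) := by
  have h0 : (∫ t in Ioo (0:ℝ) 1, t ^ (b - 1) * (1 - t) ^ (c - 1))
      = ∫ t in (0:ℝ)..1, t ^ (b - 1) * (1 - t) ^ (c - 1) := by
    rw [intervalIntegral.integral_of_le zero_le_one, integral_Ioc_eq_integral_Ioo]
  have h1 : (↑(∫ t in (0:ℝ)..1, t ^ (b - 1) * (1 - t) ^ (c - 1)) : ℂ)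
      = Complex.betaIntegral b c := by
    rw [← intervalIntegral.integral_ofReal, Complex.betaIntegral]
    refine intervalIntegral.integral_congr fun x hx => ?_
    rw [uIcc_of_le zero_le_one] at hx
    exact (cpow_ofReal_aux hx.1 hx.2 b c).symm
  have h2 := complexBeta_eq hb hc
  rw [← h1] at h2
  exact h0.trans (by exact_mod_cast h2)

lemma realBeta_integrableOn {b c : ℝ} (hb : 0 < b) (hc : 0 < c) :
    IntegrableOn (fun t : ℝ => t ^ (b - 1) * (1 - t) ^ (c - 1)) (Ioo 0 1) := by
  have h := Complex.betaIntegral_convergent (u := b) (v := c) (by simpa using hb)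
    (by simpa using hc)
  rw [intervalIntegrable_iff_integrableOn_Ioc_of_le zero_le_one] at h
  have h2 : IntegrableOn (fun x : ℝ => (x:ℂ) ^ ((b:ℂ) - 1) * ((1:ℂ) - x) ^ ((c:ℂ) - 1))
      (Ioo 0 1) := h.mono_set Ioo_subset_Ioc_self
  have h3 := h2.re
  refine (integrable_congr ?_).mp h3
  refine (ae_restrict_iff' measurableSet_Ioo).2 (ae_of_all _ fun x hx => ?_)
  simp [cpow_ofReal_aux hx.1.le hx.2.le b c]

lemma neg_log_image : (fun t : ℝ => -Real.log t) '' Ioo 0 1 = Ioi 0 := by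
  ext y
  constructor
  · rintro ⟨t, ⟨ht0, ht1⟩, rfl⟩
    simpa using Real.log_neg ht0 ht1
  · intro hy
    refine ⟨Real.exp (-y), ⟨Real.exp_pos _, ?_⟩, ?_⟩
    · rw [Real.exp_lt_one_iff]; simpa using hy
    · show -Real.log (Real.exp (-y)) = y
      rw [Real.log_exp]; ring

lemma neg_log_injOn : InjOn (fun t : ℝ => -Real.log t) (Ioo 0 1) := fun x hx y hy h =>
  Real.log_injOn_pos (mem_Ioi.2 hx.1) (mem_Ioi.2 hy.1) (by linarith [neg_injective h])

lemma neg_log_hasDeriv : ∀ t ∈ Ioo (0:ℝ) 1,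
    HasDerivWithinAt (fun s : ℝ => -Real.log s) (-t⁻¹) (Ioo 0 1) t := fun t ht =>
  ((Real.hasDerivAt_log ht.1.ne').neg).hasDerivWithinAt

lemma comp_eq {b c : ℝ} {t : ℝ} (ht : t ∈ Ioo (0:ℝ) 1) :
    |(-t⁻¹)| • (Real.exp (-b * -Real.log t) * (1 - Real.exp (-(-Real.log t))) ^ (c - 1))
      = t ^ (b - 1) * (1 - t) ^ (c - 1) := by
  have ht0 := ht.1
  have h1 : Real.exp (-b * -Real.log t) = t ^ b := by
    rw [show -b * -Real.log t = Real.log t * b by ring, Real.exp_mul, Real.exp_log ht0]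
  have h2 : Real.exp (-(-Real.log t)) = t := by rw [neg_neg, Real.exp_log ht0]
  rw [h1, h2, abs_neg, abs_inv, abs_of_pos ht0, smul_eq_mul, Real.rpow_sub ht0,
    Real.rpow_one]
  ring

lemma expBeta_integral {b c : ℝ} (hb : 0 < b) (hc : 0 < c) :
    ∫ x in Ioi (0:ℝ), Real.exp (-b * x) * (1 - Real.exp (-x)) ^ (c - 1) =
      Real.Gamma b * Real.Gamma c / Real.Gamma (b + c) := by
  rw [← neg_log_image,
    integral_image_eq_integral_abs_deriv_smul measurableSet_Ioo neg_log_hasDeriv neg_log_injOn]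
  rw [← realBeta_integral hb hc]
  exact setIntegral_congr_fun measurableSet_Ioo fun t ht => comp_eq ht

lemma expBeta_integrableOn {b c : ℝ} (hb : 0 < b) (hc : 0 < c) :
    IntegrableOn (fun x : ℝ => Real.exp (-b * x) * (1 - Real.exp (-x)) ^ (c - 1)) (Ioi 0) := by
  rw [← neg_log_image, integrableOn_image_iff_integrableOn_abs_deriv_smul
    measurableSet_Ioo neg_log_hasDeriv neg_log_injOn]
  refine (integrable_congr ?_).mpr (realBeta_integrableOn hb hc)
  exact (ae_restrict_iff' measurableSet_Ioo).2 (ae_of_all _ fun t ht => comp_eq ht)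

set_option maxHeartbeats 1000000 in
theorem descending_ladder_laplace_exponent_big_alpha
    (α ρ : ℝ) (hα : α ∈ Set.Ioo (1:ℝ) 2) (hρ : ρ ∈ Set.Ioo (1 - 1/α) (1/α))
    (lam : ℝ) (hlam : 0 ≤ lam) :
    ∫ x in Set.Ioi (0:ℝ),
        (1 - Real.exp (-lam * x)) * Real.exp ((α - 1) * x) *
          (Real.exp x - 1) ^ (-(α * (1 - ρ) + 1)) *
          (α - 1 + (1 - α * ρ) * Real.exp x) =
    Real.Gamma (1 - α * (1 - ρ)) *
      (lam * Real.Gamma (1 - α * ρ + lam) / Real.Gamma (2 - α + lam)) := by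
  obtain ⟨hα1, hα2⟩ := hα
  obtain ⟨hρ1, hρ2⟩ := hρ
  have hαpos : (0:ℝ) < α := by linarith
  have hαρ1 : α * ρ < 1 := by
    rw [lt_div_iff₀ hαpos] at hρ2; linarith
  have ha1 : α * (1 - ρ) < 1 := by
    have h : 1 - ρ < 1/α := by linarith
    rw [lt_div_iff₀ hαpos] at h; linarith
  have hρpos : 0 < ρ := by
    have h : 1/α < 1 := by rw [div_lt_one hαpos]; linarith
    linarith
  have hρ1' : ρ < 1 := by
    have h : 1/α < 1 := by rw [div_lt_one hαpos]; linarith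
    linarith
  have ha0 : 0 < α * (1 - ρ) := mul_pos hαpos (by linarith)
  have hαρ0 : 0 < α * ρ := mul_pos hαpos hρpos
  have hb1 : 0 < 1 - α * ρ := by linarith
  have hc : 0 < 1 - α * (1 - ρ) := by linarith
  rcases eq_or_lt_of_le hlam with rfl | hlam0
  · simp
  set a := α * (1 - ρ) with ha_def
  have hupos : ∀ x : ℝ, 0 < x → 0 < 1 - Real.exp (-x) := fun x hx =>
    sub_pos.2 (Real.exp_lt_one_iff.2 (by linarith))
  set g : ℝ → ℝ := fun x => Real.exp (-(1 - α * ρ) * x) * (1 - Real.exp (-x)) ^ (-a)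
    with hg_def
  set G' : ℝ → ℝ := fun x =>
    -(((1 - α * ρ) + (α - 1) * Real.exp (-x)) * Real.exp (-(1 - α * ρ) * x) *
      (1 - Real.exp (-x)) ^ (-a - 1)) with hG'_def
  set φ : ℝ → ℝ := fun x => (1 - Real.exp (-lam * x)) * g x with hφ_def
  set φ' : ℝ → ℝ := fun x =>
    lam * Real.exp (-lam * x) * g x + (1 - Real.exp (-lam * x)) * G' x with hφ'_def
  -- derivative of g
  have hgd : ∀ x ∈ Ioi (0:ℝ), HasDerivAt g (G' x) x := by
    intro x hx
    have hu : HasDerivAt (fun y : ℝ => 1 - Real.exp (-y)) (Real.exp (-x)) x := by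
      have h1 : HasDerivAt (fun y : ℝ => Real.exp (-y)) (-Real.exp (-x)) x := by
        simpa [Function.comp_def] using (Real.hasDerivAt_exp (-x)).comp x (hasDerivAt_neg x)
      simpa using h1.const_sub 1
    have hune : 1 - Real.exp (-x) ≠ 0 := (hupos x hx).ne'
    have hr : HasDerivAt (fun y : ℝ => (1 - Real.exp (-y)) ^ (-a))
        (Real.exp (-x) * (-a) * (1 - Real.exp (-x)) ^ (-a - 1)) x :=
      hu.rpow_const (Or.inl hune)
    have he : HasDerivAt (fun y : ℝ => Real.exp (-(1 - α * ρ) * y))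
        (-(1 - α * ρ) * Real.exp (-(1 - α * ρ) * x)) x := by
      have := ((hasDerivAt_id x).const_mul (-(1 - α * ρ))).exp
      simpa [mul_comm] using this
    have := he.mul hr
    rw [hG'_def]
    convert this using 1
    · rfl
    · rfl
    · rfl
    have hrw : (1 - Real.exp (-x)) ^ (-a) =
        (1 - Real.exp (-x)) ^ (-a - 1) * (1 - Real.exp (-x)) := by
      have h := Real.rpow_add_one hune (-a - 1)
      rw [show (-a - 1 + 1 : ℝ) = -a by ring] at h
      exact h
    rw [hrw, ha_def]
    ring
  -- derivative of φ
  have hφd : ∀ x ∈ Ioi (0:ℝ), HasDerivAt φ (φ' x) x := by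
    intro x hx
    have h1 : HasDerivAt (fun y : ℝ => 1 - Real.exp (-lam * y)) (lam * Real.exp (-lam * x)) x := by
      have h0 : HasDerivAt (fun y : ℝ => Real.exp (-lam * y)) (-lam * Real.exp (-lam * x)) x := by
        have := ((hasDerivAt_id x).const_mul (-lam)).exp
        simpa [mul_comm] using this
      simpa using h0.const_sub 1
    exact h1.mul (hgd x hx)
  have hkey : ∀ x ∈ Ioi (0:ℝ),
      (1 - Real.exp (-lam * x)) * Real.exp ((α - 1) * x) *
        (Real.exp x - 1) ^ (-(a + 1)) * (α - 1 + (1 - α * ρ) * Real.exp x)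
      = lam * Real.exp (-lam * x) * g x - φ' x := by
    intro x hx
    have hune := (hupos x hx).ne'
    rw [show (-(a + 1) : ℝ) = -a - 1 by ring]
    have hsplit : Real.exp x - 1 = Real.exp x * (1 - Real.exp (-x)) := by
      rw [mul_sub, mul_one, ← Real.exp_add]; simp
    have hmul : (Real.exp x * (1 - Real.exp (-x))) ^ (-a - 1)
        = Real.exp (x * (-a - 1)) * (1 - Real.exp (-x)) ^ (-a - 1) := by
      rw [Real.mul_rpow (Real.exp_pos x).le (hupos x hx).le, ← Real.exp_mul]
    have e1 : Real.exp ((α - 1) * x) * Real.exp (x * (-a - 1))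
        = Real.exp (-(1 - α * ρ) * x) * Real.exp (-x) := by
      rw [← Real.exp_add, ← Real.exp_add]
      congr 1
      rw [ha_def]; ring
    have e2 : Real.exp (-x) * Real.exp x = 1 := by rw [← Real.exp_add]; simp
    simp only [hφ'_def, hG'_def, hg_def]
    rw [hsplit, hmul]
    linear_combination ((1 - Real.exp (-lam * x)) * (1 - Real.exp (-x)) ^ (-a - 1) *
        (α - 1 + (1 - α * ρ) * Real.exp x)) * e1 +
      ((1 - Real.exp (-lam * x)) * (1 - Real.exp (-x)) ^ (-a - 1) *
        Real.exp (-(1 - α * ρ) * x) * (1 - α * ρ)) * e2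
  have hφ0 : φ 0 = 0 := by simp [hφ_def, hg_def]
  have htop : Filter.Tendsto φ Filter.atTop (nhds 0) := by
    have t1 : Filter.Tendsto (fun x => Real.exp (-lam * x)) Filter.atTop (nhds 0) := by
      have hm : Filter.Tendsto (fun x : ℝ => lam * x) Filter.atTop Filter.atTop :=
        Filter.Tendsto.const_mul_atTop hlam0 Filter.tendsto_id
      refine (Real.tendsto_exp_neg_atTop_nhds_zero.comp hm).congr fun x => ?_
      simp only [Function.comp_apply, Real.exp_eq_exp]
      ring
    have t2 : Filter.Tendsto (fun x => Real.exp (-(1 - α * ρ) * x)) Filter.atTop (nhds 0) := by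
      have hm : Filter.Tendsto (fun x : ℝ => (1 - α * ρ) * x) Filter.atTop Filter.atTop :=
        Filter.Tendsto.const_mul_atTop hb1 Filter.tendsto_id
      refine (Real.tendsto_exp_neg_atTop_nhds_zero.comp hm).congr fun x => ?_
      simp only [Function.comp_apply, Real.exp_eq_exp]
      ring
    have t3 : Filter.Tendsto (fun x => (1 - Real.exp (-x)) ^ (-a)) Filter.atTop (nhds 1) := by
      have tb : Filter.Tendsto (fun x : ℝ => 1 - Real.exp (-x)) Filter.atTop (nhds 1) := by
        simpa using tendsto_const_nhds.sub Real.tendsto_exp_neg_atTop_nhds_zero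
      have tc := (Real.continuousAt_rpow_const 1 (-a) (Or.inl one_ne_zero)).tendsto.comp tb
      simpa [Function.comp_def, Real.one_rpow] using tc
    have tc1 : Filter.Tendsto (fun _ : ℝ => (1:ℝ)) Filter.atTop (nhds 1) := tendsto_const_nhds
    have := (tc1.sub t1).mul (t2.mul t3)
    simp only [hφ_def, hg_def]
    convert this using 2 <;> norm_num
  have hcont : ContinuousWithinAt φ (Ici (0:ℝ)) 0 := by
    have hlim : Filter.Tendsto φ (nhdsWithin 0 (Ici (0:ℝ))) (nhds 0) := by
      refine squeeze_zero' (g := fun x => lam * (3 ^ a * x ^ (1 - a))) ?_ ?_ ?_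
      · filter_upwards [self_mem_nhdsWithin] with x hx
        have hx' : (0:ℝ) ≤ x := hx
        have h1 : 0 ≤ 1 - Real.exp (-lam * x) := by
          have : Real.exp (-lam * x) ≤ 1 :=
            Real.exp_le_one_iff.2 (by nlinarith)
          linarith
        have h2 : 0 ≤ g x := by
          rw [hg_def]
          refine mul_nonneg (Real.exp_pos _).le (Real.rpow_nonneg ?_ _)
          have : Real.exp (-x) ≤ 1 := Real.exp_le_one_iff.2 (by linarith)
          linarith
        rw [hφ_def]
        exact mul_nonneg h1 h2
      · have hmem : Iio (1:ℝ) ∈ nhds (0:ℝ) := Iio_mem_nhds one_pos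
        filter_upwards [self_mem_nhdsWithin, mem_nhdsWithin_of_mem_nhds hmem] with x hx hx1
        have hx' : (0:ℝ) ≤ x := hx
        have hx1' : x < 1 := hx1
        rcases eq_or_lt_of_le hx' with rfl | hxpos
        · simp only [hφ0, Real.zero_rpow hc.ne', mul_zero]
          exact le_refl 0
        · have hl1 : 1 - Real.exp (-lam * x) ≤ lam * x := by
            have := Real.add_one_le_exp (-lam * x); linarith
          have hl2 : Real.exp (-(1 - α * ρ) * x) ≤ 1 :=
            Real.exp_le_one_iff.2 (by nlinarith)
          have hx3 : x / 3 ≤ 1 - Real.exp (-x) := by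
            have hid : 1 - Real.exp (-x) = Real.exp (-x) * (Real.exp x - 1) := by
              rw [mul_sub, ← Real.exp_add]; simp
            have hge : x ≤ Real.exp x - 1 := by have := Real.add_one_le_exp x; linarith
            have h31 : (1:ℝ) / 3 ≤ Real.exp (-x) := by
              have hmon : Real.exp (-1) ≤ Real.exp (-x) := Real.exp_le_exp.2 (by linarith)
              have he3 : Real.exp 1 < 3 := by
                have := Real.exp_one_lt_d9; linarith
              have : (1:ℝ) / 3 ≤ 1 / Real.exp 1 :=
                one_div_le_one_div_of_le (Real.exp_pos 1) he3.le
              rw [Real.exp_neg, ← one_div] at hmon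
              linarith
            nlinarith [Real.exp_pos (-x)]
          have hr3 : (1 - Real.exp (-x)) ^ (-a) ≤ (x / 3) ^ (-a) :=
            Real.rpow_le_rpow_of_nonpos (by positivity) hx3 (by linarith)
          have hs3 : (x / 3) ^ (-a) = 3 ^ a * x ^ (-a) := by
            rw [Real.div_rpow hxpos.le (by norm_num : (0:ℝ) ≤ 3),
              Real.rpow_neg (by norm_num : (0:ℝ) ≤ 3)]
            field_simp
          have hxx : x * x ^ (-a) = x ^ (1 - a) := by
            have h := Real.rpow_add hxpos 1 (-a)
            rw [show (1:ℝ) + -a = 1 - a by ring, Real.rpow_one] at h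
            rw [h]
          have hgb : g x ≤ 3 ^ a * x ^ (-a) := by
            rw [hg_def, ← hs3]
            calc Real.exp (-(1 - α * ρ) * x) * (1 - Real.exp (-x)) ^ (-a)
                ≤ 1 * ((x / 3) ^ (-a)) := by
                  apply mul_le_mul hl2 hr3 (Real.rpow_nonneg (by linarith [hupos x hxpos]) _)
                    zero_le_one
              _ = (x / 3) ^ (-a) := one_mul _
          have hφb : φ x ≤ lam * (3 ^ a * x ^ (1 - a)) := by
            rw [hφ_def]
            have h1 : 0 ≤ 1 - Real.exp (-lam * x) := by
              have : Real.exp (-lam * x) ≤ 1 := Real.exp_le_one_iff.2 (by nlinarith)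
              linarith
            calc (1 - Real.exp (-lam * x)) * g x ≤ (lam * x) * (3 ^ a * x ^ (-a)) := by
                  apply mul_le_mul hl1 hgb ?_ (by positivity)
                  rw [hg_def]
                  exact mul_nonneg (Real.exp_pos _).le
                    (Real.rpow_nonneg (by linarith [hupos x hxpos]) _)
              _ = lam * (3 ^ a * (x * x ^ (-a))) := by ring
              _ = lam * (3 ^ a * x ^ (1 - a)) := by rw [hxx]
          exact hφb
      · have hx0 : Filter.Tendsto (fun x : ℝ => x ^ (1 - a)) (nhds (0:ℝ)) (nhds 0) := by
          have := (Real.continuousAt_rpow_const 0 (1 - a) (Or.inr hc.le)).tendsto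
          rwa [Real.zero_rpow hc.ne'] at this
        have := (hx0.const_mul (lam * (3:ℝ) ^ a)).mono_left (nhdsWithin_le_nhds (s := Ici (0:ℝ)))
        simp only [mul_zero] at this
        refine this.congr fun x => by ring
    show Filter.Tendsto φ (nhdsWithin 0 (Ici (0:ℝ))) (nhds (φ 0))
    rwa [hφ0]
  -- integrable: lam * e^{-lam x} * g x
  have hB1eq : ∀ x ∈ Ioi (0:ℝ), lam * Real.exp (-lam * x) * g x
      = lam * (Real.exp (-(1 - α * ρ + lam) * x) * (1 - Real.exp (-x)) ^ ((1 - a) - 1)) := by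
    intro x _
    rw [hg_def, show ((1 - a) - 1 : ℝ) = -a by ring,
      show (-(1 - α * ρ + lam) * x : ℝ) = -lam * x + -(1 - α * ρ) * x by ring, Real.exp_add]
    ring
  have hB1int : IntegrableOn (fun x => lam * Real.exp (-lam * x) * g x) (Ioi (0:ℝ)) := by
    have h := (expBeta_integrableOn (b := 1 - α * ρ + lam) (c := 1 - a) (by linarith) hc).const_mul lam
    exact IntegrableOn.congr_fun h (fun x hx => (hB1eq x hx).symm) measurableSet_Ioi
  have hB1val : ∫ x in Ioi (0:ℝ), lam * Real.exp (-lam * x) * g x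
      = lam * (Real.Gamma (1 - α * ρ + lam) * Real.Gamma (1 - a) /
          Real.Gamma ((1 - α * ρ + lam) + (1 - a))) := by
    rw [setIntegral_congr_fun measurableSet_Ioi hB1eq, MeasureTheory.integral_const_mul,
      expBeta_integral (by linarith) hc]
  -- closed form of the integrand
  have hIexp : ∀ x ∈ Ioi (0:ℝ),
      (1 - Real.exp (-lam * x)) * Real.exp ((α - 1) * x) *
        (Real.exp x - 1) ^ (-(a + 1)) * (α - 1 + (1 - α * ρ) * Real.exp x)
      = (1 - Real.exp (-lam * x)) *
          ((1 - α * ρ + (α - 1) * Real.exp (-x)) * Real.exp (-(1 - α * ρ) * x) *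
            (1 - Real.exp (-x)) ^ (-a - 1)) := by
    intro x hx
    rw [hkey x hx, hφ'_def, hG'_def, hg_def]
    ring
  -- integrability of the integrand
  have hFint : IntegrableOn (fun x =>
      (1 - Real.exp (-lam * x)) *
        ((1 - α * ρ + (α - 1) * Real.exp (-x)) * Real.exp (-(1 - α * ρ) * x) *
          (1 - Real.exp (-x)) ^ (-a - 1))) (Ioi (0:ℝ)) := by
    apply Integrable.mono' ((expBeta_integrableOn hb1 hc).const_mul ((lam + 1) * α))
    · apply ContinuousOn.aestronglyMeasurable ?_ measurableSet_Ioi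
      apply ContinuousOn.mul
      · exact (continuous_const.sub (Real.continuous_exp.comp (continuous_const.mul
          continuous_id))).continuousOn
      · apply ContinuousOn.mul
        · exact ((continuous_const.add (continuous_const.mul
            (Real.continuous_exp.comp continuous_neg))).mul
            (Real.continuous_exp.comp (continuous_const.mul continuous_id))).continuousOn
        · exact ContinuousOn.rpow_const
            (continuous_const.sub (Real.continuous_exp.comp continuous_neg)).continuousOn
            (fun x hx => Or.inl (hupos x hx).ne')
    · refine (ae_restrict_iff' measurableSet_Ioi).2 (ae_of_all _ fun x hx => ?_)
      have hxpos : (0:ℝ) < x := hx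
      have hu := hupos x hxpos
      have hP : (0:ℝ) ≤ (1 - Real.exp (-x)) ^ (-a - 1) := Real.rpow_nonneg hu.le _
      have hexp1 : Real.exp (-x) ≤ 1 := Real.exp_le_one_iff.2 (by linarith)
      have hel : Real.exp (-lam * x) ≤ 1 := Real.exp_le_one_iff.2 (by nlinarith)
      have hS0 : (0:ℝ) ≤ 1 - α * ρ + (α - 1) * Real.exp (-x) := by
        nlinarith [Real.exp_pos (-x)]
      have hSα : 1 - α * ρ + (α - 1) * Real.exp (-x) ≤ α := by nlinarith
      have hbern : 1 - Real.exp (-lam * x) ≤ (lam + 1) * (1 - Real.exp (-x)) := by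
        have h1 : Real.exp (-(lam + 1) * x) ≤ Real.exp (-lam * x) :=
          Real.exp_le_exp.2 (by nlinarith)
        have h2 : 1 + (lam + 1) * (Real.exp (-x) - 1)
            ≤ (1 + (Real.exp (-x) - 1)) ^ (lam + 1) :=
          one_add_mul_self_le_rpow_one_add (by linarith [Real.exp_pos (-x)]) (by linarith)
        have h3 : (1 + (Real.exp (-x) - 1)) ^ (lam + 1) = Real.exp (-(lam + 1) * x) := by
          rw [show 1 + (Real.exp (-x) - 1) = Real.exp (-x) by ring, ← Real.exp_mul]
          congr 1; ring
        rw [h3] at h2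
        linarith
      have e3 : (1 - Real.exp (-x)) * (1 - Real.exp (-x)) ^ (-a - 1)
          = (1 - Real.exp (-x)) ^ (-a) := by
        have h := Real.rpow_add_one hu.ne' (-a - 1)
        rw [show (-a - 1 + 1 : ℝ) = -a by ring] at h
        rw [h]; ring
      rw [Real.norm_eq_abs, abs_of_nonneg (mul_nonneg (by linarith)
        (mul_nonneg (mul_nonneg hS0 (Real.exp_pos _).le) hP)),
        show ((1 - a) - 1 : ℝ) = -a by ring]
      calc (1 - Real.exp (-lam * x)) *
            ((1 - α * ρ + (α - 1) * Real.exp (-x)) * Real.exp (-(1 - α * ρ) * x) *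
              (1 - Real.exp (-x)) ^ (-a - 1))
          ≤ ((lam + 1) * (1 - Real.exp (-x))) *
            (α * Real.exp (-(1 - α * ρ) * x) * (1 - Real.exp (-x)) ^ (-a - 1)) := by
            apply mul_le_mul hbern ?_ (by positivity) (by positivity)
            apply mul_le_mul_of_nonneg_right ?_ hP
            exact mul_le_mul_of_nonneg_right hSα (Real.exp_pos _).le
        _ = (lam + 1) * α * (Real.exp (-(1 - α * ρ) * x) *
              ((1 - Real.exp (-x)) * (1 - Real.exp (-x)) ^ (-a - 1))) := by ring
        _ = (lam + 1) * α * (Real.exp (-(1 - α * ρ) * x) * (1 - Real.exp (-x)) ^ (-a)) := by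
            rw [e3]
  have hIint : IntegrableOn (fun x =>
      (1 - Real.exp (-lam * x)) * Real.exp ((α - 1) * x) *
        (Real.exp x - 1) ^ (-(a + 1)) * (α - 1 + (1 - α * ρ) * Real.exp x)) (Ioi (0:ℝ)) :=
    IntegrableOn.congr_fun hFint (fun x hx => (hIexp x hx).symm) measurableSet_Ioi
  have hφ'int : IntegrableOn φ' (Ioi (0:ℝ)) := by
    refine IntegrableOn.congr_fun (hB1int.sub hIint) (fun x hx => ?_) measurableSet_Ioi
    show lam * Real.exp (-lam * x) * g x -
        (1 - Real.exp (-lam * x)) * Real.exp ((α - 1) * x) *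
          (Real.exp x - 1) ^ (-(a + 1)) * (α - 1 + (1 - α * ρ) * Real.exp x) = φ' x
    linarith [hkey x hx]
  have hFTC : ∫ x in Ioi (0:ℝ), φ' x = 0 - φ 0 :=
    integral_Ioi_of_hasDerivAt_of_tendsto hcont hφd hφ'int htop
  rw [hφ0, sub_zero] at hFTC
  calc ∫ x in Ioi (0:ℝ),
        (1 - Real.exp (-lam * x)) * Real.exp ((α - 1) * x) *
          (Real.exp x - 1) ^ (-(a + 1)) * (α - 1 + (1 - α * ρ) * Real.exp x)
      = ∫ x in Ioi (0:ℝ), (lam * Real.exp (-lam * x) * g x - φ' x) :=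
        setIntegral_congr_fun measurableSet_Ioi fun x hx => hkey x hx
    _ = (∫ x in Ioi (0:ℝ), lam * Real.exp (-lam * x) * g x) - ∫ x in Ioi (0:ℝ), φ' x :=
        MeasureTheory.integral_sub hB1int hφ'int
    _ = lam * (Real.Gamma (1 - α * ρ + lam) * Real.Gamma (1 - a) /
          Real.Gamma ((1 - α * ρ + lam) + (1 - a))) := by rw [hB1val, hFTC, sub_zero]
    _ = Real.Gamma (1 - a) * (lam * Real.Gamma (1 - α * ρ + lam) / Real.Gamma (2 - α + lam)) := by
        rw [show ((1 - α * ρ + lam) + (1 - a) : ℝ) = 2 - α + lam by rw [ha_def]; ring]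
        ring
end
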